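/- Let K ∈ ℂ^{m×m} with ‖K‖ ≤ 1 (a contraction for the operator norm). Then for every x, x' ∈ ℂ^m satisfying (K − I)x' + i(K + I)x = 0, one has Im⟨x', x⟩ ≥ 0, where ⟨·,·⟩ is the standard Hermitian inner product on ℂ^m. -/

import Mathlib

/-- If `K ∈ ℂ^{m×m}` is a contraction for the (Euclidean) operator norm, then every pair
`(x', x)` with `(K − I)x' + i(K + I)x = 0` satisfies `Im⟨x', x⟩ ≥ 0`, where
`⟨x', x⟩ = Σ_j x'_j (x_j)‾`. -/
theorem stmt15 (m : ℕ) (K : Matrix (Fin m) (Fin m) ℂ)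
    (hK : ∀ v : Fin m → ℂ, ∑ j, ‖K.mulVec v j‖ ^ 2 ≤ ∑ j, ‖v j‖ ^ 2)
    (x x' : Fin m → ℂ)
    (hbc : (K - 1).mulVec x' + Complex.I • (K + 1).mulVec x = 0) :
    0 ≤ (∑ j, x' j * (starRingEnd ℂ) (x j)).im := by
  have hv : K.mulVec (x' + Complex.I • x) = x' - Complex.I • x := by
    have h1 : K.mulVec x' - x' + (Complex.I • (K.mulVec x) + Complex.I • x) = 0 := by
      simpa [Matrix.sub_mulVec, Matrix.add_mulVec, Matrix.one_mulVec, smul_add] using hbc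
    have h2 : K.mulVec x' + Complex.I • K.mulVec x = x' - Complex.I • x := by
      have := h1
      funext j
      have hj := congrFun h1 j
      simp only [Pi.add_apply, Pi.sub_apply, Pi.smul_apply, Pi.zero_apply, smul_eq_mul] at hj ⊢
      linear_combination hj
    rw [Matrix.mulVec_add, Matrix.mulVec_smul, h2]
  have h := hK (x' + Complex.I • x)
  rw [hv] at h
  have key : ∑ j, ‖(x' + Complex.I • x) j‖ ^ 2 - ∑ j, ‖(x' - Complex.I • x) j‖ ^ 2
      = 4 * (∑ j, x' j * (starRingEnd ℂ) (x j)).im := by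
    rw [← Finset.sum_sub_distrib, Complex.im_sum, Finset.mul_sum]
    refine Finset.sum_congr rfl fun j _ => ?_
    simp only [Pi.add_apply, Pi.sub_apply, Pi.smul_apply, smul_eq_mul,
      Complex.sq_norm, Complex.normSq_apply, Complex.add_re, Complex.add_im, Complex.sub_re,
      Complex.sub_im, Complex.mul_re, Complex.mul_im, Complex.I_re, Complex.I_im,
      Complex.conj_re, Complex.conj_im]
    ring
  linarith
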